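/- The element R is invertible in A ⊗ A, with inverse R⁻¹ = (S ⊗ id)(R) = (1/(2N)) Σ_{j,k ∈ ℤ_{2N}} t^{jk} K^{−j} ⊗ K^{−k}; that is, R·((1/(2N)) Σ_{j,k ∈ ℤ_{2N}} t^{jk} K^{−j} ⊗ K^{−k}) = 1 ⊗ 1 = ((1/(2N)) Σ_{j,k ∈ ℤ_{2N}} t^{jk} K^{−j} ⊗ K^{−k})·R. -/

import Mathlib

open Finset TensorProduct

noncomputable section

/-- The quantum group `U_t(u(1)) = ℂ[ℤ_{2N}]`, the complex group algebra of the cyclic group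
`ℤ_{2N}`. -/
abbrev QG (N : ℕ) := MonoidAlgebra ℂ (Multiplicative (ZMod (2 * N)))

/-- The basis element `K^j`, `j ∈ ℤ_{2N}` (`K` is the image of the fixed generator `1`). -/
def KK (N : ℕ) (j : ZMod (2 * N)) : QG N :=
  MonoidAlgebra.single (Multiplicative.ofAdd j) 1

/-- `t = exp(πi/N)`, a primitive `2N`-th root of unity. -/
def tq (N : ℕ) : ℂ := Complex.exp ((Real.pi : ℂ) * Complex.I / N)

/-- The universal `R`-matrix `R = (1/2N) Σ_{j,k ∈ ℤ_{2N}} t^{−jk} K^j ⊗ K^k`. -/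
def Rmat (N : ℕ) : QG N ⊗[ℂ] QG N :=
  (2 * (N : ℂ))⁻¹ • ∑ j ∈ Finset.range (2 * N), ∑ k ∈ Finset.range (2 * N),
    tq N ^ (-((j : ℤ) * (k : ℤ))) • (KK N (j : ZMod (2 * N)) ⊗ₜ[ℂ] KK N (k : ZMod (2 * N)))

/-- The comultiplication `Δ : A → A ⊗ A`, `Δ(K^j) = K^j ⊗ K^j`. -/
def DeltaQG (N : ℕ) : QG N →ₐ[ℂ] QG N ⊗[ℂ] QG N :=
  (MonoidAlgebra.lift ℂ (QG N ⊗[ℂ] QG N) (Multiplicative (ZMod (2 * N))))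
    { toFun := fun x => MonoidAlgebra.single x 1 ⊗ₜ[ℂ] MonoidAlgebra.single x 1
      map_one' := by
        simp [MonoidAlgebra.one_def, Algebra.TensorProduct.one_def]
      map_mul' := fun x y => by
        simp only [Algebra.TensorProduct.tmul_mul_tmul, MonoidAlgebra.single_mul_single,
          one_mul] }

/-- The antipode `S : A → A`, `S(K^j) = K^{−j}`. -/
def SQG (N : ℕ) : QG N →ₐ[ℂ] QG N :=
  (MonoidAlgebra.lift ℂ (QG N) (Multiplicative (ZMod (2 * N))))
    { toFun := fun x => MonoidAlgebra.single x⁻¹ 1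
      map_one' := by simp [MonoidAlgebra.one_def]
      map_mul' := fun x y => by
        simp only [mul_inv, MonoidAlgebra.single_mul_single, one_mul] }

/-- The claimed inverse `(1/2N) Σ_{j,k ∈ ℤ_{2N}} t^{jk} K^{−j} ⊗ K^{−k}` of the `R`-matrix. -/
def RmatInv (N : ℕ) : QG N ⊗[ℂ] QG N :=
  (2 * (N : ℂ))⁻¹ • ∑ j ∈ Finset.range (2 * N), ∑ k ∈ Finset.range (2 * N),
    tq N ^ ((j : ℤ) * (k : ℤ)) •
      (KK N (-(j : ZMod (2 * N))) ⊗ₜ[ℂ] KK N (-(k : ZMod (2 * N))))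

section helpers
variable (N : ℕ)

lemma tq_ne_zero : tq N ≠ 0 := Complex.exp_ne_zero _

lemma tq_prim (hpos : 0 < N) : IsPrimitiveRoot (tq N) (2 * N) := by
  have h2 : (2 * N : ℕ) ≠ 0 := by omega
  have := Complex.isPrimitiveRoot_exp (2*N) h2
  convert this using 2
  have hN : (N : ℂ) ≠ 0 := by exact_mod_cast hpos.ne'
  rw [tq, show ((2*N:ℕ):ℂ) = 2*N by norm_cast]
  congr 1
  rw [div_eq_div_iff hN (mul_ne_zero two_ne_zero hN)]
  ring

lemma tq_pow_n (hpos : 0 < N) : tq N ^ (2 * N) = 1 := (tq_prim N hpos).pow_eq_one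

def zt (a : ZMod (2 * N)) : ℂ := tq N ^ a.val

lemma zpow_eq_zt (hpos : 0 < N) (m : ℤ) : tq N ^ m = zt N ((m : ZMod (2*N))) := by
  haveI : NeZero (2 * N) := ⟨by omega⟩
  have h1 : tq N ^ (2 * N : ℕ) = 1 := tq_pow_n N hpos
  have key : tq N ^ m = tq N ^ (m % (2 * N : ℕ) : ℤ) := by
    conv_lhs => rw [← Int.emod_add_mul_ediv m (2 * N : ℕ)]
    rw [zpow_add₀ (tq_ne_zero N), zpow_mul]
    norm_cast
    rw [h1, one_zpow, mul_one]
  rw [key, ← ZMod.val_intCast m, zpow_natCast, zt]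

lemma natCast_val_self {n : ℕ} [NeZero n] (a : ZMod n) : ((a.val : ℕ) : ZMod n) = a :=
  ZMod.natCast_rightInverse a

lemma zt_add (hpos : 0 < N) (a b : ZMod (2*N)) : zt N (a + b) = zt N a * zt N b := by
  haveI : NeZero (2 * N) := ⟨by omega⟩
  have h1 := zpow_eq_zt N hpos ((a.val : ℤ) + b.val)
  have h2 : (((a.val : ℤ) + b.val : ℤ) : ZMod (2*N)) = a + b := by
    push_cast
    rw [natCast_val_self, natCast_val_self]
  rw [h2] at h1
  rw [← h1, zpow_add₀ (tq_ne_zero N), zt, zt, zpow_natCast, zpow_natCast]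

lemma zt_zero : zt N 0 = 1 := by simp [zt, ZMod.val_zero]

lemma sum_zmod_eq {M : Type*} [AddCommMonoid M] [NeZero (2*N)] (f : ZMod (2*N) → M) :
    ∑ j ∈ range (2*N), f (j : ZMod (2*N)) = ∑ a : ZMod (2*N), f a := by
  refine Finset.sum_nbij' (fun j => (j : ZMod (2*N))) (fun a => a.val)
    (fun a _ => mem_univ _) (fun a _ => mem_range.mpr (ZMod.val_lt a))
    (fun a ha => ZMod.val_cast_of_lt (mem_range.mp ha))
    (fun a _ => natCast_val_self a) (fun a _ => rfl)

lemma zt_sum (hpos : 0 < N) [NeZero (2*N)] (u : ZMod (2*N)) :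
    ∑ a : ZMod (2*N), zt N (u * a) = if u = 0 then (2 * N : ℂ) else 0 := by
  have key : ∀ a : ZMod (2*N), zt N (u * a) = (tq N ^ u.val) ^ a.val := by
    intro a
    have h0 := zpow_eq_zt N hpos ((u.val : ℤ) * a.val)
    have h2 : (((u.val : ℤ) * a.val : ℤ) : ZMod (2*N)) = u * a := by
      push_cast; rw [natCast_val_self, natCast_val_self]
    rw [h2] at h0
    rw [← h0, ← zpow_natCast (tq N ^ u.val), ← zpow_natCast (tq N), ← zpow_mul]
  rw [Finset.sum_congr rfl (fun a _ => key a), ← sum_zmod_eq N (fun a => (tq N ^ u.val) ^ a.val)]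
  have hval : ∀ j ∈ range (2*N), (tq N ^ u.val) ^ ((j : ZMod (2*N)).val) = (tq N ^ u.val) ^ j := by
    intro j hj; rw [ZMod.val_cast_of_lt (mem_range.mp hj)]
  rw [Finset.sum_congr rfl hval]
  by_cases hu : u = 0
  · subst hu; simp [ZMod.val_zero]
  · rw [if_neg hu]
    have hx1 : tq N ^ u.val ≠ 1 := by
      intro h
      have hd := ((tq_prim N hpos).pow_eq_one_iff_dvd u.val).mp h
      have hlt : u.val < 2 * N := ZMod.val_lt u
      have hne : u.val ≠ 0 := fun h0 => hu (by rwa [ZMod.val_eq_zero] at h0)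
      have := Nat.le_of_dvd (Nat.pos_of_ne_zero hne) hd
      omega
    have hxn : (tq N ^ u.val) ^ (2*N) = 1 := by
      rw [← pow_mul, mul_comm u.val, pow_mul, tq_pow_n N hpos, one_pow]
    have : ∑ i ∈ range (2*N), (tq N ^ u.val) ^ i = 0 := by
      rw [geom_sum_eq hx1, hxn, sub_self, zero_div]
    exact this

lemma KK_mul (a b : ZMod (2*N)) : KK N a * KK N b = KK N (a + b) := by
  simp [KK, MonoidAlgebra.single_mul_single, ← ofAdd_add]

lemma KK_zero : KK N 0 = 1 := by simp [KK, MonoidAlgebra.one_def]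

lemma SQG_KK (a : ZMod (2*N)) : SQG N (KK N a) = KK N (-a) := by
  simp only [SQG, KK, MonoidAlgebra.lift_single, one_smul]
  congr 1

/-- the (un-normalized) projection elements -/
def ee (a : ZMod (2*N)) [NeZero (2*N)] : QG N :=
  ∑ b : ZMod (2*N), zt N (-(a*b)) • KK N b

variable [NeZero (2*N)]

lemma ee_mul (hpos : 0 < N) (a c : ZMod (2*N)) :
    ee N a * ee N c = if a = c then (2*N : ℂ) • ee N a else 0 := by
  rw [ee, ee, Finset.sum_mul]
  simp only [Finset.mul_sum, smul_mul_smul_comm, KK_mul]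
  have step1 : ∀ b : ZMod (2*N),
      ∑ d : ZMod (2*N), (zt N (-(a*b)) * zt N (-(c*d))) • KK N (b + d)
      = ∑ d : ZMod (2*N), (zt N ((c-a)*b) * zt N (-(c*d))) • KK N d := by
    intro b
    rw [(Fintype.sum_equiv (Equiv.subRight b)
      (fun d => (zt N ((c-a)*b) * zt N (-(c*d))) • KK N d)
      (fun d => (zt N (-(a*b)) * zt N (-(c*d))) • KK N (b + d)) ?_).symm]
    intro d
    simp only [Equiv.subRight_apply]
    rw [show b + (d - b) = d by ring]
    congr 1
    rw [← zt_add N hpos, ← zt_add N hpos]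
    congr 1
    ring
  rw [Finset.sum_congr rfl (fun b _ => step1 b), Finset.sum_comm]
  have step2 : ∀ d : ZMod (2*N),
      ∑ b : ZMod (2*N), (zt N ((c-a)*b) * zt N (-(c*d))) • KK N d
      = ((if c - a = 0 then (2*N:ℂ) else 0) * zt N (-(c*d))) • KK N d := by
    intro d
    rw [← Finset.sum_smul, ← Finset.sum_mul, zt_sum N hpos]
  rw [Finset.sum_congr rfl (fun d _ => step2 d)]
  by_cases hac : a = c
  · subst hac
    simp only [sub_self, if_pos rfl, if_pos rfl, smul_sum]
    refine Finset.sum_congr rfl (fun d _ => ?_)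
    simp [smul_smul]
  · rw [if_neg hac, if_neg (fun h => hac (by linear_combination -h))]
    simp

lemma ee_total (hpos : 0 < N) : ∑ a : ZMod (2*N), ee N a = (2*N : ℂ) • 1 := by
  have h1 : (∑ a : ZMod (2*N), ee N a)
      = ∑ b : ZMod (2*N), (∑ a : ZMod (2*N), zt N ((-b)*a)) • KK N b := by
    simp only [ee]
    rw [Finset.sum_comm]
    refine Finset.sum_congr rfl (fun b _ => ?_)
    rw [Finset.sum_smul]
    exact Finset.sum_congr rfl (fun a _ => by rw [show (-b)*a = -(a*b) by ring])
  rw [h1]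
  have h2 : ∀ b : ZMod (2*N), (∑ a : ZMod (2*N), zt N ((-b)*a)) • KK N b
      = (if -b = 0 then (2*N:ℂ) else 0) • KK N b := by
    intro b; rw [zt_sum N hpos]
  rw [Finset.sum_congr rfl (fun b _ => h2 b), Finset.sum_eq_single 0]
  · simp [KK_zero]
  · intro b _ hb
    rw [if_neg (fun h => hb (by linear_combination -h)), zero_smul]
  · intro h; exact absurd (mem_univ 0) h

lemma Rmat_eq (hpos : 0 < N) :
    Rmat N = (2 * (N : ℂ))⁻¹ • ∑ a : ZMod (2*N), KK N a ⊗ₜ[ℂ] ee N a := by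
  rw [Rmat]
  congr 1
  have hterm : ∀ j k : ℕ, tq N ^ (-((j:ℤ)*(k:ℤ))) • (KK N (j : ZMod (2*N)) ⊗ₜ[ℂ] KK N (k : ZMod (2*N)))
      = zt N (-((j : ZMod (2*N)) * (k : ZMod (2*N)))) • (KK N (j:ZMod (2*N)) ⊗ₜ[ℂ] KK N (k:ZMod (2*N))) := by
    intro j k
    rw [zpow_eq_zt N hpos]
    congr 2
    push_cast
    ring
  calc ∑ j ∈ range (2*N), ∑ k ∈ range (2*N), tq N ^ (-((j:ℤ)*(k:ℤ))) • (KK N (j:ZMod (2*N)) ⊗ₜ[ℂ] KK N (k:ZMod (2*N)))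
      = ∑ j ∈ range (2*N), ∑ k ∈ range (2*N), zt N (-((j:ZMod (2*N))*(k:ZMod (2*N)))) • (KK N (j:ZMod (2*N)) ⊗ₜ[ℂ] KK N (k:ZMod (2*N))) :=
        Finset.sum_congr rfl fun j _ => Finset.sum_congr rfl fun k _ => hterm j k
    _ = ∑ j ∈ range (2*N), ∑ b : ZMod (2*N), zt N (-((j:ZMod (2*N))*b)) • (KK N (j:ZMod (2*N)) ⊗ₜ[ℂ] KK N b) :=
        Finset.sum_congr rfl fun j _ => sum_zmod_eq N
          (fun b => zt N (-((j:ZMod (2*N))*b)) • (KK N (j:ZMod (2*N)) ⊗ₜ[ℂ] KK N b))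
    _ = ∑ a : ZMod (2*N), ∑ b : ZMod (2*N), zt N (-(a*b)) • (KK N a ⊗ₜ[ℂ] KK N b) :=
        sum_zmod_eq N (fun a => ∑ b : ZMod (2*N), zt N (-(a*b)) • (KK N a ⊗ₜ[ℂ] KK N b))
    _ = ∑ a : ZMod (2*N), KK N a ⊗ₜ[ℂ] ee N a := by
        refine Finset.sum_congr rfl fun a _ => ?_
        rw [ee, TensorProduct.tmul_sum]
        exact Finset.sum_congr rfl fun b _ => (TensorProduct.tmul_smul _ _ _).symm

lemma RmatInv_eq (hpos : 0 < N) :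
    RmatInv N = (2 * (N : ℂ))⁻¹ • ∑ a : ZMod (2*N), KK N (-a) ⊗ₜ[ℂ] ee N a := by
  rw [RmatInv]
  congr 1
  have hterm : ∀ j k : ℕ, tq N ^ ((j:ℤ)*(k:ℤ)) • (KK N (-(j : ZMod (2*N))) ⊗ₜ[ℂ] KK N (-(k : ZMod (2*N))))
      = zt N ((j : ZMod (2*N)) * (k : ZMod (2*N))) • (KK N (-(j:ZMod (2*N))) ⊗ₜ[ℂ] KK N (-(k:ZMod (2*N)))) := by
    intro j k
    rw [zpow_eq_zt N hpos]
    congr 2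
    push_cast
    ring
  calc ∑ j ∈ range (2*N), ∑ k ∈ range (2*N), tq N ^ ((j:ℤ)*(k:ℤ)) • (KK N (-(j:ZMod (2*N))) ⊗ₜ[ℂ] KK N (-(k:ZMod (2*N))))
      = ∑ j ∈ range (2*N), ∑ k ∈ range (2*N), zt N ((j:ZMod (2*N))*(k:ZMod (2*N))) • (KK N (-(j:ZMod (2*N))) ⊗ₜ[ℂ] KK N (-(k:ZMod (2*N)))) :=
        Finset.sum_congr rfl fun j _ => Finset.sum_congr rfl fun k _ => hterm j k
    _ = ∑ j ∈ range (2*N), ∑ b : ZMod (2*N), zt N ((j:ZMod (2*N))*b) • (KK N (-(j:ZMod (2*N))) ⊗ₜ[ℂ] KK N (-b)) :=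
        Finset.sum_congr rfl fun j _ => sum_zmod_eq N
          (fun b => zt N ((j:ZMod (2*N))*b) • (KK N (-(j:ZMod (2*N))) ⊗ₜ[ℂ] KK N (-b)))
    _ = ∑ a : ZMod (2*N), ∑ b : ZMod (2*N), zt N (a*b) • (KK N (-a) ⊗ₜ[ℂ] KK N (-b)) :=
        sum_zmod_eq N (fun a => ∑ b : ZMod (2*N), zt N (a*b) • (KK N (-a) ⊗ₜ[ℂ] KK N (-b)))
    _ = ∑ a : ZMod (2*N), KK N (-a) ⊗ₜ[ℂ] ee N a := by
        refine Finset.sum_congr rfl fun a _ => ?_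
        rw [ee, TensorProduct.tmul_sum]
        refine Fintype.sum_equiv (Equiv.neg (ZMod (2*N))) _ _ fun b => ?_
        simp only [Equiv.neg_apply]
        rw [show -(a * -b) = a * b from by ring, ← TensorProduct.tmul_smul]

end helpers

/-- `R` is invertible in `A ⊗ A`, with inverse `R⁻¹ = (S ⊗ id)(R) =
(1/2N) Σ_{j,k ∈ ℤ_{2N}} t^{jk} K^{−j} ⊗ K^{−k}`. -/
theorem stmt_9 (N : ℕ) (hpos : 0 < N) (hN : Even N) :
    (Algebra.TensorProduct.map (SQG N) (AlgHom.id ℂ (QG N))) (Rmat N) = RmatInv N ∧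
    Rmat N * RmatInv N = 1 ∧ RmatInv N * Rmat N = 1 := by
  haveI : NeZero (2 * N) := ⟨by omega⟩
  have hNc : (2 * (N : ℂ)) ≠ 0 := by
    have : (N : ℂ) ≠ 0 := by exact_mod_cast hpos.ne'
    exact mul_ne_zero two_ne_zero this
  have part1 : (Algebra.TensorProduct.map (SQG N) (AlgHom.id ℂ (QG N))) (Rmat N) = RmatInv N := by
    rw [Rmat_eq N hpos, RmatInv_eq N hpos, map_smul, map_sum]
    congr 1
    refine Finset.sum_congr rfl fun a _ => ?_
    rw [Algebra.TensorProduct.map_tmul, SQG_KK, AlgHom.id_apply]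
  have part2 : Rmat N * RmatInv N = 1 := by
    rw [Rmat_eq N hpos, RmatInv_eq N hpos, smul_mul_smul_comm, Finset.sum_mul_sum]
    have hterm : ∀ a c : ZMod (2*N),
        (KK N a ⊗ₜ[ℂ] ee N a) * (KK N (-c) ⊗ₜ[ℂ] ee N c)
        = if a = c then (2*N:ℂ) • (KK N (a + -c) ⊗ₜ[ℂ] ee N a) else 0 := by
      intro a c
      rw [Algebra.TensorProduct.tmul_mul_tmul, KK_mul, ee_mul N hpos]
      by_cases h : a = c
      · rw [if_pos h, if_pos h, TensorProduct.tmul_smul]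
      · rw [if_neg h, if_neg h, TensorProduct.tmul_zero]
    rw [Finset.sum_congr rfl fun a _ => Finset.sum_congr rfl fun c _ => hterm a c]
    have hinner : ∀ a : ZMod (2*N),
        (∑ c : ZMod (2*N), if a = c then (2*N:ℂ) • (KK N (a + -c) ⊗ₜ[ℂ] ee N a) else 0)
        = (2*N:ℂ) • ((1 : QG N) ⊗ₜ[ℂ] ee N a) := by
      intro a
      rw [Finset.sum_ite_eq univ a (fun c => (2*N:ℂ) • (KK N (a + -c) ⊗ₜ[ℂ] ee N a)),
        if_pos (mem_univ a), add_neg_cancel, KK_zero]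
    rw [Finset.sum_congr rfl fun a _ => hinner a, ← Finset.smul_sum, ← TensorProduct.tmul_sum,
      ee_total N hpos, TensorProduct.tmul_smul, smul_smul, smul_smul]
    rw [show (2 * (N : ℂ))⁻¹ * (2 * (N : ℂ))⁻¹ * (2 * (N:ℂ)) * (2 * (N:ℂ)) = 1 from by
      field_simp; exact div_self (by exact_mod_cast hpos.ne'), one_smul]
    exact Algebra.TensorProduct.one_def.symm
  exact ⟨part1, part2, (mul_comm (RmatInv N) (Rmat N)).trans part2⟩
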